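/- If a vertex-scalar graph G is connected, then the decreasing-order scalar tree construction produces a single tree (i.e., the resulting forest on the nodes of G has exactly one connected component), rooted at a node of minimum scalar value. -/

import Mathlib

variable {V : Type*} [Fintype V] [DecidableEq V]

/-- Follow the parent pointers \`p\` for at most \`k\` steps. -/
def iterParent {α : Type*} (p : α → Option α) : ℕ → α → α
  | 0, a => a
  | k + 1, a =>
    match p a with
    | none => a
    | some b => iterParent p k b

/-- The root of the current subtree containing \`a\` in the forest \`p\`. -/
def rootOf {α : Type*} [Fintype α] (p : α → Option α) (a : α) : α :=
  iterParent p (Fintype.card α) a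

/-- Processing vertex \`v\`: for each already-processed neighbor \`u\` whose current
subtree does not contain \`v\`, make \`v\` the parent of the root of that subtree. -/
def stepVert (G : SimpleGraph V) [DecidableRel G.Adj] (v : V) (processed : List V)
    (p : V → Option V) : V → Option V :=
  processed.foldl (fun q u =>
    if G.Adj v u ∧ rootOf q u ≠ v then Function.update q (rootOf q u) (some v) else q) p

/-- Run the scalar-tree construction on the remaining vertex list, given the
already-processed vertices and the current parent assignment. -/
def runVert (G : SimpleGraph V) [DecidableRel G.Adj] :
    List V → List V → (V → Option V) → (V → Option V)
  | [], _, p => p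
  | v :: rest, processed, p => runVert G rest (v :: processed) (stepVert G v processed p)

/-- The parent assignment produced by processing the vertices of \`vs\` in order. -/
def scalarForest (G : SimpleGraph V) [DecidableRel G.Adj] (vs : List V) : V → Option V :=
  runVert G vs [] (fun _ => none)

/-- \`C\` is a maximal α-connected component of the vertex-scalar graph \`(G, f)\`. -/
def IsMACC (G : SimpleGraph V) (f : V → ℝ) (α : ℝ) (C : Set V) : Prop :=
  C.Nonempty ∧ (∀ v ∈ C, α ≤ f v) ∧
  (∀ v ∈ C, ∀ w, G.Adj v w → w ∉ C → f w < α) ∧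
  (G.induce C).Connected

/-! ### Auxiliary lemmas about `iterParent` and `rootOf` -/

section AuxGeneral

variable {α : Type*}

/-- The parent-pointer step relation. -/
def pRel (p : α → Option α) : α → α → Prop := fun a b => p a = some b

theorem iterParent_of_none {p : α → Option α} {a : α} (h : p a = none) :
    ∀ k, iterParent p k a = a
  | 0 => rfl
  | k + 1 => by simp [iterParent, h]

theorem iterParent_rtg (p : α → Option α) :
    ∀ (k : ℕ) (a : α), Relation.ReflTransGen (pRel p) a (iterParent p k a)
  | 0, a => .refl
  | k + 1, a => by
    rcases h : p a with _ | b
    · simp only [iterParent, h]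
      exact Relation.ReflTransGen.refl
    · simp only [iterParent, h]
      exact Relation.ReflTransGen.head h (iterParent_rtg p k b)

theorem iterParent_none {p : α → Option α} {m : α → ℕ}
    (hd : ∀ x w, p x = some w → m w < m x) :
    ∀ (k : ℕ) (a : α), m a < k → p (iterParent p k a) = none
  | 0, a, hk => absurd hk (Nat.not_lt_zero _)
  | k + 1, a, hk => by
    rcases h : p a with _ | b
    · simpa [iterParent, h] using h
    · simp only [iterParent, h]
      exact iterParent_none hd k b (lt_of_lt_of_le (hd a b h) (Nat.lt_succ_iff.mp hk))

theorem rtg_none {p : α → Option α} {a b : α} (h : p a = none)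
    (hr : Relation.ReflTransGen (pRel p) a b) : b = a := by
  rcases hr.cases_head with rfl | ⟨c, hc, -⟩
  · rfl
  · have hc' : p a = some c := hc
    rw [h] at hc'
    exact nomatch hc'

theorem root_unique {p : α → Option α} :
    ∀ {a r1 : α}, Relation.ReflTransGen (pRel p) a r1 → p r1 = none →
    ∀ {r2 : α}, Relation.ReflTransGen (pRel p) a r2 → p r2 = none → r1 = r2 := by
  intro a r1 h1
  induction h1 using Relation.ReflTransGen.head_induction_on with
  | refl => intro hr1 r2 h2 hr2; exact (rtg_none hr1 h2).symm
  | @head x c hstep hrest ih =>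
    intro hr1 r2 h2 hr2
    rcases h2.cases_head with rfl | ⟨d, hd, hdr2⟩
    · exact absurd hstep (by simp [pRel, hr2])
    · have hcd : c = d := by
        have h1' : p x = some c := hstep
        have h2' : p x = some d := hd
        rw [h1'] at h2'; exact Option.some.inj h2'
      exact ih hr1 (hcd ▸ hdr2) hr2

variable [Fintype α]

theorem rootOf_rtg (p : α → Option α) (a : α) :
    Relation.ReflTransGen (pRel p) a (rootOf p a) := iterParent_rtg p _ a

theorem rootOf_of_none {p : α → Option α} {a : α} (h : p a = none) :
    rootOf p a = a := iterParent_of_none h _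

theorem rootOf_root {p : α → Option α} {m : α → ℕ}
    (hd : ∀ x w, p x = some w → m w < m x)
    (hm : ∀ x, m x < Fintype.card α ∨ p x = none) (a : α) :
    p (rootOf p a) = none := by
  rcases hm a with h | h
  · exact iterParent_none hd _ a h
  · rw [rootOf_of_none h]; exact h

theorem rootOf_eq {p : α → Option α} {m : α → ℕ}
    (hd : ∀ x w, p x = some w → m w < m x)
    (hm : ∀ x, m x < Fintype.card α ∨ p x = none) {a r : α}
    (har : Relation.ReflTransGen (pRel p) a r) (hr : p r = none) :
    rootOf p a = r :=
  root_unique (rootOf_rtg p a) (rootOf_root hd hm a) har hr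

theorem rootOf_update [DecidableEq α] {p : α → Option α} {m : α → ℕ}
    (hd : ∀ x w, p x = some w → m w < m x)
    (hm : ∀ x, m x < Fintype.card α ∨ p x = none)
    {r0 v : α} (hr0 : p r0 = none) (hv : p v = none) (hne : v ≠ r0)
    (hdv : ∀ x w, Function.update p r0 (some v) x = some w → m w < m x)
    (hmv : ∀ x, m x < Fintype.card α ∨ Function.update p r0 (some v) x = none)
    (x : α) :
    rootOf (Function.update p r0 (some v)) x =
      if rootOf p x = r0 then v else rootOf p x := by
  set q := Function.update p r0 (some v) with hq
  have lift : ∀ {y z : α}, Relation.ReflTransGen (pRel p) y z →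
      Relation.ReflTransGen (pRel q) y z := by
    intro y z h
    induction h with
    | refl => exact .refl
    | @tail b c hyb hstep ih =>
        refine ih.tail ?_
        have hne' : b ≠ r0 := by
          intro hh
          have hstep' : p b = some c := hstep
          rw [hh, hr0] at hstep'
          exact nomatch hstep'
        show q b = some c
        rw [hq, Function.update_of_ne hne']; exact hstep
  by_cases h : rootOf p x = r0
  · rw [if_pos h]
    apply rootOf_eq hdv hmv
    · refine Relation.ReflTransGen.tail (lift (rootOf_rtg p x)) ?_
      show q (rootOf p x) = some v
      rw [h, hq, Function.update_self]
    · show q v = none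
      rw [hq, Function.update_of_ne hne]; exact hv
  · rw [if_neg h]
    apply rootOf_eq hdv hmv (lift (rootOf_rtg p x))
    show q (rootOf p x) = none
    rw [hq, Function.update_of_ne h]
    exact rootOf_root hd hm x

end AuxGeneral

/-! ### Invariants for the construction -/

section Invariants

variable (G : SimpleGraph V) [DecidableRel G.Adj]

/-- Invariant maintained while folding over the processed neighbors of `v`. -/
structure FInv (v : V) (done : List V) (q : V → Option V) : Prop where
  nd : (v :: done).Nodup
  none_out : ∀ x, x ∉ done → q x = none
  decr : ∀ x w, q x = some w → x ∈ done ∧ w ∈ v :: done ∧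
    (v :: done).idxOf w < (v :: done).idxOf x
  conn : ∀ a ∈ done, ∀ b ∈ done, G.Adj a b → rootOf q a = rootOf q b

namespace FInv

variable {G} {v : V} {done : List V} {q : V → Option V}

theorem hmeas (hJ : FInv G v done q) :
    ∀ x, (v :: done).idxOf x < Fintype.card V ∨ q x = none := by
  intro x
  by_cases hx : x ∈ done
  · exact Or.inl (lt_of_lt_of_le (List.idxOf_lt_length_iff.2 (List.mem_cons_of_mem v hx))
      hJ.nd.length_le_card)
  · exact Or.inr (hJ.none_out x hx)

theorem hdec (hJ : FInv G v done q) :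
    ∀ x w, q x = some w → (v :: done).idxOf w < (v :: done).idxOf x :=
  fun x w h => (hJ.decr x w h).2.2

theorem q_v (hJ : FInv G v done q) : q v = none :=
  hJ.none_out v (List.nodup_cons.1 hJ.nd).1

theorem root_none (hJ : FInv G v done q) (a : V) : q (rootOf q a) = none :=
  rootOf_root hJ.hdec hJ.hmeas a

theorem root_mem (hJ : FInv G v done q) {u : V} (hu : u ∈ done) :
    rootOf q u ∈ v :: done := by
  rcases (rootOf_rtg q u).cases_tail with h | ⟨c, -, hstep⟩
  · rw [h]; exact List.mem_cons_of_mem v hu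
  · exact (hJ.decr c _ hstep).2.1

end FInv

theorem FInv.step {v : V} {done : List V} {q : V → Option V}
    (hJ : FInv G v done q) {u : V} (hu : u ∈ done) :
    FInv G v done
      (if G.Adj v u ∧ rootOf q u ≠ v then Function.update q (rootOf q u) (some v) else q) ∧
    (∀ x, rootOf q x = v →
      rootOf (if G.Adj v u ∧ rootOf q u ≠ v then
        Function.update q (rootOf q u) (some v) else q) x = v) ∧
    (G.Adj v u →
      rootOf (if G.Adj v u ∧ rootOf q u ≠ v then
        Function.update q (rootOf q u) (some v) else q) u = v) := by
  by_cases hc : G.Adj v u ∧ rootOf q u ≠ v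
  · rw [if_pos hc]
    set r0 := rootOf q u with hr0def
    have hvne : v ≠ r0 := by intro h; exact hc.2 h.symm
    have hr0 : q r0 = none := hJ.root_none u
    have hv : q v = none := hJ.q_v
    have hr0mem : r0 ∈ done := by
      rcases List.mem_cons.mp (hJ.root_mem hu) with h | h
      · exact absurd h hc.2
      · exact h
    have hmv : (v :: done).idxOf v < (v :: done).idxOf r0 := by
      rw [List.idxOf_cons_self, List.idxOf_cons_ne done hvne]
      exact Nat.succ_pos _
    have hdv : ∀ x w, Function.update q r0 (some v) x = some w →
        (v :: done).idxOf w < (v :: done).idxOf x := by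
      intro x w hxw
      by_cases hx : x = r0
      · subst hx
        rw [Function.update_self] at hxw
        rw [← Option.some.inj hxw]
        exact hmv
      · rw [Function.update_of_ne hx] at hxw
        exact hJ.hdec x w hxw
    have hmv' : ∀ x, (v :: done).idxOf x < Fintype.card V ∨
        Function.update q r0 (some v) x = none := by
      intro x
      by_cases hx : x ∈ done
      · exact Or.inl (lt_of_lt_of_le (List.idxOf_lt_length_iff.2 (List.mem_cons_of_mem v hx))
          hJ.nd.length_le_card)
      · refine Or.inr ?_
        rw [Function.update_of_ne (fun h => hx (by rw [h]; exact hr0mem))]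
        exact hJ.none_out x hx
    have map := rootOf_update hJ.hdec hJ.hmeas hr0 hv hvne hdv hmv'
    refine ⟨⟨hJ.nd, ?_, ?_, ?_⟩, ?_, ?_⟩
    · intro x hx
      rw [Function.update_of_ne (fun h => hx (by rw [h]; exact hr0mem))]
      exact hJ.none_out x hx
    · intro x w hxw
      by_cases hx : x = r0
      · subst hx
        rw [Function.update_self] at hxw
        rw [← Option.some.inj hxw]
        exact ⟨hr0mem, List.mem_cons_self, hmv⟩
      · rw [Function.update_of_ne hx] at hxw
        exact hJ.decr x w hxw
    · intro a ha b hb hab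
      rw [map a, map b, hJ.conn a ha b hb hab]
    · intro x hx
      rw [map x, hx, if_neg hvne]
    · intro _
      rw [map u, if_pos rfl]
  · rw [if_neg hc]
    refine ⟨hJ, fun x hx => hx, fun hadj => ?_⟩
    by_contra hne
    exact hc ⟨hadj, hne⟩

theorem fold_inv {v : V} {done : List V} :
    ∀ (l : List V) (q : V → Option V), (∀ u ∈ l, u ∈ done) → FInv G v done q →
    FInv G v done (l.foldl (fun q u =>
      if G.Adj v u ∧ rootOf q u ≠ v then Function.update q (rootOf q u) (some v) else q) q) ∧
    (∀ x, rootOf q x = v → rootOf (l.foldl (fun q u =>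
      if G.Adj v u ∧ rootOf q u ≠ v then Function.update q (rootOf q u) (some v) else q) q) x = v) ∧
    (∀ u ∈ l, G.Adj v u → rootOf (l.foldl (fun q u =>
      if G.Adj v u ∧ rootOf q u ≠ v then Function.update q (rootOf q u) (some v) else q) q) u = v)
  | [], q, _, hJ => ⟨hJ, fun _ hx => hx, by simp⟩
  | u :: l, q, hmem, hJ => by
    have hstep := FInv.step G hJ (hmem u (List.mem_cons_self))
    obtain ⟨h1, h2, h3⟩ := fold_inv l _ (fun x hx => hmem x (List.mem_cons_of_mem u hx)) hstep.1
    simp only [List.foldl_cons]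
    refine ⟨h1, fun x hx => h2 x (hstep.2.1 x hx), ?_⟩
    intro w hw hadj
    rcases List.mem_cons.mp hw with rfl | hw
    · exact h2 w (hstep.2.2 hadj)
    · exact h3 w hw hadj

/-- Invariant maintained by `runVert`. -/
structure RInv (done : List V) (p : V → Option V) : Prop where
  nd : done.Nodup
  none_out : ∀ x, x ∉ done → p x = none
  decr : ∀ x w, p x = some w → x ∈ done ∧ w ∈ done ∧ done.idxOf w < done.idxOf x
  conn : ∀ a ∈ done, ∀ b ∈ done, G.Adj a b → rootOf p a = rootOf p b
  head_none : ∀ h t, done = h :: t → p h = none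

theorem RInv.step_vert {v : V} {done : List V} {p : V → Option V}
    (hI : RInv G done p) (hv : v ∉ done) :
    RInv G (v :: done) (stepVert G v done p) := by
  have hJ : FInv G v done p := by
    refine ⟨List.nodup_cons.2 ⟨hv, hI.nd⟩, hI.none_out, ?_, hI.conn⟩
    intro x w hxw
    obtain ⟨hx, hw, hlt⟩ := hI.decr x w hxw
    refine ⟨hx, List.mem_cons_of_mem v hw, ?_⟩
    rw [List.idxOf_cons_ne done (fun h => hv (by rw [h]; exact hw)),
      List.idxOf_cons_ne done (fun h => hv (by rw [h]; exact hx))]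
    exact Nat.succ_lt_succ hlt
  obtain ⟨h1, -, h3⟩ := fold_inv G done p (fun u hu => hu) hJ
  show RInv G (v :: done) (List.foldl (fun q u =>
    if G.Adj v u ∧ rootOf q u ≠ v then Function.update q (rootOf q u) (some v) else q) p done)
  set q' := List.foldl (fun q u =>
    if G.Adj v u ∧ rootOf q u ≠ v then Function.update q (rootOf q u) (some v) else q) p done
    with hq'
  have hpv : q' v = none := h1.none_out v (List.nodup_cons.1 h1.nd).1
  have hrv : rootOf q' v = v := rootOf_of_none hpv
  refine ⟨h1.nd, ?_, ?_, ?_, ?_⟩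
  · intro x hx
    exact h1.none_out x (fun h => hx (List.mem_cons_of_mem v h))
  · intro x w hxw
    obtain ⟨hx, hw, hlt⟩ := h1.decr x w hxw
    exact ⟨List.mem_cons_of_mem v hx, hw, hlt⟩
  · intro a ha b hb hab
    rcases List.mem_cons.mp ha with rfl | ha'
    · rcases List.mem_cons.mp hb with rfl | hb'
      · rfl
      · rw [hrv, h3 b hb' hab]
    · rcases List.mem_cons.mp hb with rfl | hb'
      · rw [hrv, h3 a ha' hab.symm]
      · exact h1.conn a ha' b hb' hab
  · intro h t hht
    injection hht with e1 e2
    rw [← e1]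
    exact hpv

theorem runVert_inv :
    ∀ (l done : List V) (p : V → Option V), l.Nodup → (∀ x ∈ l, x ∉ done) →
    RInv G done p → RInv G (l.reverse ++ done) (runVert G l done p)
  | [], done, p, _, _, h => by simpa [runVert] using h
  | v :: l, done, p, hnd, hdisj, h => by
    have h1 : RInv G (v :: done) (stepVert G v done p) :=
      RInv.step_vert G h (hdisj v (List.mem_cons_self))
    have h2 := runVert_inv l (v :: done) (stepVert G v done p)
      (List.nodup_cons.1 hnd).2
      (fun x hx => by
        rcases List.nodup_cons.1 hnd with ⟨hvl, -⟩
        intro hmem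
        rcases List.mem_cons.mp hmem with rfl | hmem
        · exact hvl hx
        · exact hdisj x (List.mem_cons_of_mem v hx) hmem) h1
    simpa [runVert, List.append_assoc] using h2

end Invariants

/-- If `G` is connected, the decreasing-order construction produces a single
tree: there is a unique parentless node, it has minimum scalar value, and every
node reaches it by following parents. -/
theorem stmt12 (G : SimpleGraph V) [DecidableRel G.Adj] (f : V → ℝ)
    (hG : G.Connected)
    (vs : List V) (hnd : vs.Nodup) (hall : ∀ v : V, v ∈ vs)
    (hsort : vs.Pairwise (fun a b => f b ≤ f a)) :
    ∃ r : V, scalarForest G vs r = none ∧ (∀ u : V, f r ≤ f u) ∧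
      (∀ u : V, Relation.ReflTransGen
        (fun a b => scalarForest G vs a = some b) u r) ∧
      (∀ r' : V, scalarForest G vs r' = none → r' = r) := by
  haveI : Nonempty V := hG.nonempty
  set p := scalarForest G vs with hp
  have hbase : RInv G [] (fun _ => none) := by
    exact ⟨List.nodup_nil, fun _ _ => rfl, fun x w h => by simp at h,
      by simp, fun h t ht => by simp at ht⟩
  have hI : RInv G vs.reverse p := by
    have := runVert_inv G vs [] (fun _ => none) hnd (by simp) hbase
    simpa [scalarForest, hp] using this
  have hmemall : ∀ x : V, x ∈ vs.reverse := fun x => List.mem_reverse.2 (hall x)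
  have hd : ∀ x w, p x = some w → vs.reverse.idxOf w < vs.reverse.idxOf x :=
    fun x w h => (hI.decr x w h).2.2
  have hm : ∀ x, vs.reverse.idxOf x < Fintype.card V ∨ p x = none := fun x =>
    Or.inl (lt_of_lt_of_le (List.idxOf_lt_length_iff.2 (hmemall x)) hI.nd.length_le_card)
  have hrootnone : ∀ a, p (rootOf p a) = none := rootOf_root hd hm
  have hedge : ∀ a b, G.Adj a b → rootOf p a = rootOf p b := fun a b hab =>
    hI.conn a (hmemall a) b (hmemall b) hab
  have hsame : ∀ a b : V, rootOf p a = rootOf p b := by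
    intro a b
    obtain ⟨w⟩ := hG.preconnected a b
    induction w with
    | nil => rfl
    | cons h _ ih => exact (hedge _ _ h).trans ih
  -- vs.reverse is nonempty
  obtain ⟨r, t, hrt⟩ : ∃ r t, vs.reverse = r :: t := by
    rcases hv : vs.reverse with _ | ⟨r, t⟩
    · exact absurd (hv ▸ hmemall (Classical.arbitrary V)) List.not_mem_nil
    · exact ⟨r, t, rfl⟩
  have hrnone : p r = none := hI.head_none r t hrt
  have hrroot : rootOf p r = r := rootOf_of_none hrnone
  have hroots : ∀ u : V, rootOf p u = r := fun u => (hsame u r).trans hrroot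
  refine ⟨r, hrnone, ?_, ?_, ?_⟩
  · -- minimality
    have hpw : vs.reverse.Pairwise (fun a b => f a ≤ f b) := List.pairwise_reverse.2 hsort
    rw [hrt] at hpw
    intro u
    have hu : u ∈ r :: t := hrt ▸ hmemall u
    rcases List.mem_cons.mp hu with rfl | hu
    · exact le_refl _
    · exact (List.pairwise_cons.1 hpw).1 u hu
  · intro u
    have := rootOf_rtg p u
    rw [hroots u] at this
    exact this
  · intro r' hr'
    rw [← hroots r', rootOf_of_none hr']
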